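/- arXiv:2008.09376 — 2 statements merged into one kernel-verified Lean document; each statement's English description precedes it below -/
import Mathlib

section
/- The function g(t) = (π/4)·(1−t)²·₂F₁(3/2, 3/2; 1; t) is monotonically nondecreasing on [0,1) and satisfies π/4 ≤ g(t) ≤ 1 for all t ∈ [0,1). -/
/-- The Gauss hypergeometric series `₂F₁(a,b;c;x) = Σ_k (a)_k (b)_k / ((c)_k k!) xᵏ`. -/
noncomputable def hyp2F1 (a b c x : ℝ) : ℝ :=
  ∑' k : ℕ, ((ascPochhammer ℝ k).eval a * (ascPochhammer ℝ k).eval b /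
    ((ascPochhammer ℝ k).eval c * (Nat.factorial k))) * x ^ k

open Filter Topology

noncomputable def myw : ℕ → ℝ
  | 0 => 1
  | k + 1 => myw k * (2 * k + 1) / (2 * k + 2)

lemma myw_pos (k : ℕ) : 0 < myw k := by
  induction k with
  | zero => norm_num [myw]
  | succ k ih => simp only [myw]; positivity

lemma myw_le_one (k : ℕ) : myw k ≤ 1 := by
  induction k with
  | zero => norm_num [myw]
  | succ k ih =>
    simp only [myw]
    rw [div_le_one (by positivity)]
    nlinarith [myw_pos k]

noncomputable def mya (k : ℕ) : ℝ := ((2 * k + 1) * myw k) ^ 2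
noncomputable def myb (k : ℕ) : ℝ := (myw k / (2 * k - 1)) ^ 2

lemma poch32 (k : ℕ) :
    (ascPochhammer ℝ k).eval (3 / 2) = (2 * k + 1) * myw k * (Nat.factorial k) := by
  induction k with
  | zero => simp [myw]
  | succ k ih =>
    rw [ascPochhammer_succ_eval, ih]
    simp only [myw, Nat.factorial_succ]
    push_cast
    field_simp
    ring

lemma myb_rec (k : ℕ) : myb (k + 2) = mya (k + 2) - 2 * mya (k + 1) + mya k := by
  have h1 : myw (k + 1) = myw k * (2 * k + 1) / (2 * k + 2) := by simp [myw]
  have h2 : myw (k + 2) = myw (k + 1) * (2 * (k+1) + 1) / (2 * (k+1) + 2) := by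
    simp only [myw]; push_cast; ring_nf
  have d1 : (2 * (k:ℝ) + 2) ≠ 0 := by positivity
  have d2 : (2 * ((k:ℝ) + 1) + 2) ≠ 0 := by positivity
  have d3 : (2 * ((k:ℝ) + 2) - 1) ≠ 0 := by nlinarith [Nat.cast_nonneg (α := ℝ) k]
  simp only [mya, myb, h2, h1]
  push_cast
  field_simp
  ring

lemma partial_sum_b (n : ℕ) :
    ∑ k ∈ Finset.range (n + 1), myb k = (4 * n + 1) * (myw n) ^ 2 := by
  induction n with
  | zero => norm_num [myb, myw]
  | succ n ih =>
    rw [Finset.sum_range_succ, ih]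
    have d1 : (2 * (n:ℝ) + 2) ≠ 0 := by positivity
    have d2 : (2 * ((n:ℝ) + 1) - 1) ≠ 0 := by nlinarith [Nat.cast_nonneg (α := ℝ) n]
    simp only [myb, myw]
    push_cast
    field_simp
    ring

open Real in
lemma prod_eq_inv (n : ℕ) :
    ∏ i ∈ Finset.range n, ((2:ℝ) * i + 2) / (2 * i + 1) * ((2 * i + 2) / (2 * i + 3)) =
      1 / ((2 * n + 1) * (myw n) ^ 2) := by
  induction n with
  | zero => norm_num [myw]
  | succ n ih =>
    rw [Finset.prod_range_succ, ih]
    have hw := myw_pos n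
    have d1 : (2 * (n:ℝ) + 1) ≠ 0 := by positivity
    have d2 : (2 * (n:ℝ) + 2) ≠ 0 := by positivity
    have d3 : (2 * (n:ℝ) + 3) ≠ 0 := by positivity
    have d4 : (2 * ((n:ℝ) + 1) + 1) ≠ 0 := by positivity
    simp only [myw]
    push_cast
    field_simp
    ring

open Filter Real in
lemma tendsto_wallis_w : Tendsto (fun n : ℕ => (2 * (n:ℝ) + 1) * (myw n) ^ 2)
    atTop (𝓝 (2 / π)) := by
  have h1 : Tendsto (fun n : ℕ => 1 / ((2 * (n:ℝ) + 1) * (myw n) ^ 2)) atTop (𝓝 (π / 2)) := by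
    have := Real.tendsto_prod_pi_div_two
    simpa only [prod_eq_inv] using this
  have h2 := h1.inv₀ (by positivity : (π / 2) ≠ 0)
  have h3 : ∀ n : ℕ, (1 / ((2 * (n:ℝ) + 1) * (myw n) ^ 2))⁻¹ = (2 * (n:ℝ) + 1) * (myw n) ^ 2 := by
    intro n; rw [one_div, inv_inv]
  simp only [h3] at h2
  convert h2 using 2
  rw [eq_comm, inv_div]

open Filter Real in
lemma tendsto_w_sq : Tendsto (fun n : ℕ => (myw n) ^ 2) atTop (𝓝 0) := by
  have hinv : Tendsto (fun n : ℕ => (2 * (n:ℝ) + 1)⁻¹) atTop (𝓝 0) := by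
    apply Tendsto.inv_tendsto_atTop
    apply Filter.tendsto_atTop_add_const_right
    exact tendsto_natCast_atTop_atTop.const_mul_atTop (by norm_num)
  have := tendsto_wallis_w.mul hinv
  rw [mul_zero] at this
  convert this using 2 with n
  have d1 : (2 * (n:ℝ) + 1) ≠ 0 := by positivity
  field_simp

open Filter Real in
lemma tendsto_partial_b : Tendsto (fun n : ℕ => (4 * (n:ℝ) + 1) * (myw n) ^ 2)
    atTop (𝓝 (4 / π)) := by
  have h := (tendsto_wallis_w.const_mul 2).sub tendsto_w_sq
  rw [sub_zero] at h
  have e : (2 : ℝ) * (2 / π) = 4 / π := by ring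
  rw [e] at h
  convert h using 2 with n
  ring

open Real in
lemma hasSum_myb : HasSum myb (4 / π) := by
  have hf : ∀ i, 0 ≤ myb i := fun i => sq_nonneg _
  rw [hasSum_iff_tendsto_nat_of_nonneg hf]
  rw [← Filter.tendsto_add_atTop_iff_nat 1]
  simp only [partial_sum_b]
  exact tendsto_partial_b

lemma hyp2F1_eq_tsum_a (t : ℝ) :
    hyp2F1 (3 / 2) (3 / 2) 1 t = ∑' k : ℕ, mya k * t ^ k := by
  unfold hyp2F1
  apply tsum_congr
  intro k
  rw [ascPochhammer_eval_one, poch32]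
  have hf : ((Nat.factorial k : ℝ)) ≠ 0 := Nat.cast_ne_zero.mpr (Nat.factorial_ne_zero k)
  unfold mya
  field_simp

lemma mya_nonneg (k : ℕ) : 0 ≤ mya k := sq_nonneg _

lemma summable_a {t : ℝ} (h0 : 0 ≤ t) (h1 : t < 1) :
    Summable (fun k : ℕ => mya k * t ^ k) := by
  have hnorm : ‖t‖ < 1 := by rwa [Real.norm_eq_abs, abs_of_nonneg h0]
  have s2 : Summable (fun n : ℕ => (n : ℝ) ^ 2 * t ^ n) :=
    summable_pow_mul_geometric_of_norm_lt_one 2 hnorm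
  have s1 : Summable (fun n : ℕ => (n : ℝ) ^ 1 * t ^ n) :=
    summable_pow_mul_geometric_of_norm_lt_one 1 hnorm
  have s0 : Summable (fun n : ℕ => t ^ n) := summable_geometric_of_lt_one h0 h1
  have smaj : Summable (fun n : ℕ => (2 * (n:ℝ) + 1) ^ 2 * t ^ n) := by
    have := ((s2.mul_left 4).add (s1.mul_left 4)).add s0
    convert this using 2 with n
    · rfl
    ring
  apply Summable.of_nonneg_of_le (fun k => mul_nonneg (mya_nonneg k) (by positivity)) _ smaj
  intro k
  have hw1 := myw_le_one k
  have hw0 := (myw_pos k).le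
  have ht : (0:ℝ) ≤ t ^ k := by positivity
  have : mya k ≤ (2 * (k:ℝ) + 1) ^ 2 := by
    unfold mya
    rw [mul_pow]
    have hw2 : myw k ^ 2 ≤ 1 := by nlinarith
    exact mul_le_of_le_one_right (sq_nonneg _) hw2
  exact mul_le_mul_of_nonneg_right this ht

noncomputable def sh1 (t : ℝ) : ℕ → ℝ
  | 0 => 0
  | k + 1 => mya k * t ^ (k + 1)

noncomputable def sh2 (t : ℝ) : ℕ → ℝ
  | 0 => 0
  | 1 => 0
  | k + 2 => mya k * t ^ (k + 2)

lemma key_identity {t : ℝ} (h0 : 0 ≤ t) (h1 : t < 1) :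
    (1 - t) ^ 2 * hyp2F1 (3 / 2) (3 / 2) 1 t = ∑' k : ℕ, myb k * t ^ k := by
  have hA : Summable (fun k : ℕ => mya k * t ^ k) := summable_a h0 h1
  have hS1' : Summable (fun k : ℕ => mya k * t ^ (k + 1)) := by
    have := hA.mul_right t
    convert this using 2 with k
    · rfl
    ring
  have hS2' : Summable (fun k : ℕ => mya k * t ^ (k + 2)) := by
    have := hA.mul_right (t ^ 2)
    convert this using 2 with k
    · rfl
    ring
  have hsh1 : Summable (sh1 t) := by
    rw [← summable_nat_add_iff 1]
    exact hS1'
  have hsh2 : Summable (sh2 t) := by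
    rw [← summable_nat_add_iff 2]
    exact hS2'
  have tsum_sh1 : ∑' k, sh1 t k = t * ∑' k, mya k * t ^ k := by
    rw [Summable.tsum_eq_zero_add hsh1]
    show (0 : ℝ) + ∑' k, mya k * t ^ (k + 1) = _
    rw [zero_add, ← tsum_mul_left]
    apply tsum_congr; intro k; ring
  have tsum_sh2 : ∑' k, sh2 t k = t ^ 2 * ∑' k, mya k * t ^ k := by
    rw [Summable.tsum_eq_zero_add hsh2]
    have hsh2s : Summable (fun k => sh2 t (k + 1)) := (summable_nat_add_iff 1).mpr hsh2
    rw [Summable.tsum_eq_zero_add hsh2s]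
    show (0 : ℝ) + ((0 : ℝ) + ∑' k, mya k * t ^ (k + 2)) = _
    rw [zero_add, zero_add, ← tsum_mul_left]
    apply tsum_congr; intro k; ring
  have hterm : ∀ k : ℕ, myb k * t ^ k = mya k * t ^ k - 2 * sh1 t k + sh2 t k := by
    intro k
    match k with
    | 0 => show myb 0 * t ^ 0 = mya 0 * t ^ 0 - 2 * 0 + 0; norm_num [myb, mya, myw]
    | 1 =>
      show myb 1 * t ^ 1 = mya 1 * t ^ 1 - 2 * (mya 0 * t ^ (0 + 1)) + 0
      norm_num [myb, mya, myw]
      ring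
    | (k + 2) =>
      show myb (k + 2) * t ^ (k + 2) =
        mya (k + 2) * t ^ (k + 2) - 2 * (mya (k + 1) * t ^ (k + 1 + 1)) + mya k * t ^ (k + 2)
      rw [myb_rec]
      ring
  calc (1 - t) ^ 2 * hyp2F1 (3 / 2) (3 / 2) 1 t
      = (∑' k, mya k * t ^ k) - 2 * (t * ∑' k, mya k * t ^ k)
          + t ^ 2 * ∑' k, mya k * t ^ k := by rw [hyp2F1_eq_tsum_a]; ring
    _ = (∑' k, mya k * t ^ k) - 2 * (∑' k, sh1 t k) + ∑' k, sh2 t k := by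
          rw [tsum_sh1, tsum_sh2]
    _ = (∑' k, mya k * t ^ k) - (∑' k, 2 * sh1 t k) + ∑' k, sh2 t k := by
          rw [tsum_mul_left]
    _ = ∑' k, (mya k * t ^ k - 2 * sh1 t k + sh2 t k) := by
          rw [Summable.tsum_add (hA.sub (hsh1.mul_left 2)) hsh2, Summable.tsum_sub hA (hsh1.mul_left 2)]
    _ = ∑' k, myb k * t ^ k := tsum_congr fun k => (hterm k).symm

lemma myb_le_one (k : ℕ) : myb k ≤ 1 := by
  have hw0 := (myw_pos k).le
  have hw1 := myw_le_one k
  match k with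
  | 0 => norm_num [myb, myw]
  | (k + 1) =>
    unfold myb
    have hd : (1:ℝ) ≤ 2 * (↑(k + 1):ℝ) - 1 := by push_cast; nlinarith [Nat.cast_nonneg (α := ℝ) k]
    have hq : myw (k + 1) / (2 * (↑(k + 1):ℝ) - 1) ≤ 1 := by
      rw [div_le_one (by linarith)]
      linarith
    have hq0 : 0 ≤ myw (k + 1) / (2 * (↑(k + 1):ℝ) - 1) := by
      apply div_nonneg hw0; linarith
    nlinarith

lemma summable_b {t : ℝ} (h0 : 0 ≤ t) (h1 : t < 1) :
    Summable (fun k : ℕ => myb k * t ^ k) := by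
  apply Summable.of_nonneg_of_le (fun k => mul_nonneg (sq_nonneg _) (by positivity))
    (fun k => ?_) (summable_geometric_of_lt_one h0 h1)
  calc myb k * t ^ k ≤ 1 * t ^ k :=
        mul_le_mul_of_nonneg_right (myb_le_one k) (by positivity)
    _ = t ^ k := one_mul _

lemma G_mono {s t : ℝ} (hs0 : 0 ≤ s) (hst : s ≤ t) (ht1 : t < 1) :
    (∑' k : ℕ, myb k * s ^ k) ≤ ∑' k : ℕ, myb k * t ^ k := by
  refine Summable.tsum_le_tsum (fun k => ?_) (summable_b hs0 (lt_of_le_of_lt hst ht1))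
    (summable_b (hs0.trans hst) ht1)
  exact mul_le_mul_of_nonneg_left (pow_le_pow_left₀ hs0 hst k) (sq_nonneg _)

open Real in
lemma G_bounds {t : ℝ} (h0 : 0 ≤ t) (h1 : t < 1) :
    1 ≤ (∑' k : ℕ, myb k * t ^ k) ∧ (∑' k : ℕ, myb k * t ^ k) ≤ 4 / π := by
  constructor
  · have := Summable.le_tsum (summable_b h0 h1) 0
      (fun i _ => mul_nonneg (sq_nonneg _) (by positivity))
    calc (1:ℝ) = myb 0 * t ^ 0 := by norm_num [myb, myw]
      _ ≤ _ := this
  · have hle : (∑' k : ℕ, myb k * t ^ k) ≤ ∑' k : ℕ, myb k := by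
      refine Summable.tsum_le_tsum (fun k => ?_) (summable_b h0 h1) hasSum_myb.summable
      have : t ^ k ≤ 1 := pow_le_one₀ h0 h1.le
      calc myb k * t ^ k ≤ myb k * 1 :=
            mul_le_mul_of_nonneg_left this (sq_nonneg _)
        _ = myb k := mul_one _
    rwa [hasSum_myb.tsum_eq] at hle


/-- **`g(t) = (π/4)(1−t)² ₂F₁(3/2,3/2;1;t)` is nondecreasing on `[0,1)` with
`π/4 ≤ g(t) ≤ 1`.** -/
theorem monotone_and_bounds_g :
    MonotoneOn (fun t : ℝ => Real.pi / 4 * (1 - t) ^ 2 * hyp2F1 (3 / 2) (3 / 2) 1 t)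
      (Set.Ico (0 : ℝ) 1) ∧
    ∀ t ∈ Set.Ico (0 : ℝ) 1,
      Real.pi / 4 ≤ Real.pi / 4 * (1 - t) ^ 2 * hyp2F1 (3 / 2) (3 / 2) 1 t ∧
      Real.pi / 4 * (1 - t) ^ 2 * hyp2F1 (3 / 2) (3 / 2) 1 t ≤ 1 := by
  have hval : ∀ t ∈ Set.Ico (0 : ℝ) 1,
      Real.pi / 4 * (1 - t) ^ 2 * hyp2F1 (3 / 2) (3 / 2) 1 t =
        Real.pi / 4 * ∑' k : ℕ, myb k * t ^ k := by
    intro t ht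
    rw [mul_assoc, key_identity ht.1 ht.2]
  have hpi4 : (0 : ℝ) ≤ Real.pi / 4 := by positivity
  constructor
  · intro s hs t ht hst
    simp only
    rw [hval s hs, hval t ht]
    exact mul_le_mul_of_nonneg_left (G_mono hs.1 hst ht.2) hpi4
  · intro t ht
    rw [hval t ht]
    obtain ⟨hl, hu⟩ := G_bounds ht.1 ht.2
    constructor
    · nlinarith [Real.pi_pos]
    · calc Real.pi / 4 * (∑' k : ℕ, myb k * t ^ k) ≤ Real.pi / 4 * (4 / Real.pi) :=
            mul_le_mul_of_nonneg_left hu hpi4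
        _ = 1 := by field_simp
end

section
/- Let a_b ∈ ℂ^M and a_r ∈ ℂ^N have unit-modulus entries, let h_d ∈ ℂ^M with a_b^H h_d ≠ 0, let h_ru ∈ ℂ^N, and let β_br > 0. Then the maximum over phase vectors φ ∈ ℝ^N of ‖h_d + √β_br · a_b · (a_r^H · Diag(e^{jφ₁}, …, e^{jφ_N}) · h_ru)‖₂² equals ‖h_d‖₂² + 2·√β_br·|a_b^H h_d|·Σ_{n=1}^N |h_ru,n| + β_br·M·(Σ_{n=1}^N |h_ru,n|)², and it is attained at the RIS phase matrix Φ = (a_b^H h_d / |a_b^H h_d|)·Diag(e^{j∠a_r})·Diag(e^{−j∠h_ru}). -/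
open Complex

/-- Auxiliary expansion: `Σ ‖hd i + w ab i‖² = Σ‖hd i‖² + M‖w‖² + 2 Re(w̄ c)`. -/
lemma ris_expand (M : ℕ) (ab hd : Fin M → ℂ) (hab : ∀ i, ‖ab i‖ = 1) (w : ℂ) :
    (∑ i, ‖hd i + w * ab i‖ ^ 2)
      = (∑ i, ‖hd i‖ ^ 2) + M * ‖w‖ ^ 2
        + 2 * ((starRingEnd ℂ) w * ∑ i, (starRingEnd ℂ) (ab i) * hd i).re := by
  have hi : ∀ i, ‖hd i + w * ab i‖ ^ 2
      = ‖hd i‖ ^ 2 + ‖w‖ ^ 2 + 2 * ((starRingEnd ℂ) w * ((starRingEnd ℂ) (ab i) * hd i)).re := by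
    intro i
    have h1 : Complex.normSq (ab i) = 1 := by
      rw [← Complex.sq_norm, hab i]; norm_num
    have e1 : ‖hd i + w * ab i‖ ^ 2 = Complex.normSq (hd i + w * ab i) := by
      rw [Complex.sq_norm]
    have e2 : ‖hd i‖ ^ 2 = Complex.normSq (hd i) := by
      rw [Complex.sq_norm]
    have e3 : ‖w‖ ^ 2 = Complex.normSq w := by
      rw [Complex.sq_norm]
    rw [e1, e2, e3, Complex.normSq_add, Complex.normSq_mul, h1, mul_one]
    congr 2
    have : hd i * (starRingEnd ℂ) (w * ab i)
        = (starRingEnd ℂ) w * ((starRingEnd ℂ) (ab i) * hd i) := by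
      rw [map_mul]; ring
    rw [this]
  rw [Finset.mul_sum, Complex.re_sum]
  simp only [hi]
  rw [Finset.sum_add_distrib, Finset.sum_add_distrib, ← Finset.mul_sum,
    Finset.sum_const, Finset.card_univ, Fintype.card_fin, nsmul_eq_mul]

/-- **Optimal RIS phases:** the maximum over phase vectors `φ ∈ ℝ^N` of
`‖h_d + √β_br a_b (a_r^H Diag(e^{jφ}) h_ru)‖₂²` is
`‖h_d‖² + 2√β_br |a_b^H h_d| Σ_n |h_ru,n| + β_br M (Σ_n |h_ru,n|)²`, attained at
`Φ = (a_b^H h_d/|a_b^H h_d|) Diag(e^{j∠a_r}) Diag(e^{−j∠h_ru})`. -/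
theorem optimal_ris_phases
    (M N : ℕ) (hM : 1 ≤ M) (hN : 1 ≤ N) (βbr : ℝ) (hβbr : 0 < βbr)
    (ab : Fin M → ℂ) (hab : ∀ i, ‖ab i‖ = 1)
    (ar : Fin N → ℂ) (har : ∀ n, ‖ar n‖ = 1)
    (hd : Fin M → ℂ) (hru : Fin N → ℂ)
    (hne : (∑ i, (starRingEnd ℂ) (ab i) * hd i) ≠ 0) :
    -- the squared channel norm as a function of the RIS phases φ
    let f : (Fin N → ℝ) → ℝ := fun φ =>
      ∑ i, ‖hd i + (Real.sqrt βbr : ℂ) * ab i *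
        (∑ n, (starRingEnd ℂ) (ar n) * Complex.exp ((φ n : ℂ) * Complex.I) * hru n)‖ ^ 2
    -- the optimal value
    let optval : ℝ := (∑ i, ‖hd i‖ ^ 2)
      + 2 * Real.sqrt βbr * ‖∑ i, (starRingEnd ℂ) (ab i) * hd i‖ * (∑ n, ‖hru n‖)
      + βbr * M * (∑ n, ‖hru n‖) ^ 2
    -- ψ = a_b^H h_d / |a_b^H h_d|
    let ψ : ℂ := (∑ i, (starRingEnd ℂ) (ab i) * hd i) /
      ((‖∑ i, (starRingEnd ℂ) (ab i) * hd i‖ : ℝ) : ℂ)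
    -- the diagonal entries of the optimal Φ = ψ Diag(e^{j∠a_r}) Diag(e^{−j∠h_ru})
    let Φdiag : Fin N → ℂ := fun n =>
      ψ * Complex.exp (((arg (ar n) : ℝ) : ℂ) * Complex.I) *
        Complex.exp (-(((arg (hru n) : ℝ) : ℂ)) * Complex.I)
    -- the maximum of f is optval …
    IsGreatest (Set.range f) optval ∧
    -- … and it is attained at the RIS phase matrix Φ
    (∑ i, ‖hd i + (Real.sqrt βbr : ℂ) * ab i *
        (∑ n, (starRingEnd ℂ) (ar n) * Φdiag n * hru n)‖ ^ 2) = optval := by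
  intro f optval ψ Φdiag
  set c : ℂ := ∑ i, (starRingEnd ℂ) (ab i) * hd i with hc
  set S : ℝ := ∑ n, ‖hru n‖ with hS
  have hSnn : 0 ≤ S := Finset.sum_nonneg fun n _ => norm_nonneg _
  have hcpos : 0 < ‖c‖ := norm_pos_iff.mpr hne
  have hc0 : ((‖c‖ : ℝ) : ℂ) ≠ 0 := by
    exact_mod_cast hcpos.ne'
  have hψdef : ψ = c / ((‖c‖ : ℝ) : ℂ) := rfl
  have hψnorm : ‖ψ‖ = 1 := by
    rw [hψdef, norm_div, Complex.norm_real, Real.norm_of_nonneg hcpos.le, div_self hcpos.ne']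
  have hmc : (starRingEnd ℂ) c * c = ((‖c‖ : ℝ) : ℂ) ^ 2 := by
    rw [mul_comm, Complex.mul_conj]
    push_cast
    norm_cast
    rw [Complex.normSq_eq_norm_sq]
  have hconjψc : (starRingEnd ℂ) ψ * c = ((‖c‖ : ℝ) : ℂ) := by
    rw [hψdef, map_div₀, Complex.conj_ofReal, div_mul_eq_mul_div, hmc, sq,
      mul_div_assoc, div_self hc0, mul_one]
  -- per-entry computations for the optimal phase matrix
  have hear : ∀ n, Complex.exp (((arg (ar n) : ℝ) : ℂ) * Complex.I) = ar n := by
    intro n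
    have habs : ((‖ar n‖ : ℝ) : ℂ) = 1 := by
      rw [har n]; norm_num
    have h := Complex.norm_mul_exp_arg_mul_I (ar n)
    rwa [habs, one_mul] at h
  have harr : ∀ n, (starRingEnd ℂ) (ar n) * ar n = 1 := by
    intro n
    have h1 : Complex.normSq (ar n) = 1 := by
      rw [← Complex.sq_norm, har n]; norm_num
    rw [mul_comm, Complex.mul_conj, h1]; norm_num
  have hehr : ∀ n, Complex.exp (-(((arg (hru n) : ℝ) : ℂ)) * Complex.I) * hru n
      = ((‖hru n‖ : ℝ) : ℂ) := by
    intro n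
    calc Complex.exp (-(((arg (hru n) : ℝ) : ℂ)) * Complex.I) * hru n
        = Complex.exp (-(((arg (hru n) : ℝ) : ℂ)) * Complex.I) *
          (((‖hru n‖ : ℝ) : ℂ) *
            Complex.exp (((arg (hru n) : ℝ) : ℂ) * Complex.I)) := by
          rw [Complex.norm_mul_exp_arg_mul_I]
      _ = ((‖hru n‖ : ℝ) : ℂ) *
          Complex.exp (-(((arg (hru n) : ℝ) : ℂ)) * Complex.I
            + ((arg (hru n) : ℝ) : ℂ) * Complex.I) := by
          rw [Complex.exp_add]; ring
      _ = ((‖hru n‖ : ℝ) : ℂ) := by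
          rw [neg_mul, neg_add_cancel, Complex.exp_zero, mul_one]
  have hterm : ∀ n, (starRingEnd ℂ) (ar n) * Φdiag n * hru n = ψ * ((‖hru n‖ : ℝ) : ℂ) := by
    intro n
    have hΦ : Φdiag n = ψ * Complex.exp (((arg (ar n) : ℝ) : ℂ) * Complex.I) *
        Complex.exp (-(((arg (hru n) : ℝ) : ℂ)) * Complex.I) := rfl
    rw [hΦ, hear n]
    calc (starRingEnd ℂ) (ar n) * (ψ * ar n *
          Complex.exp (-(((arg (hru n) : ℝ) : ℂ)) * Complex.I)) * hru n
        = ψ * ((starRingEnd ℂ) (ar n) * ar n) *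
          (Complex.exp (-(((arg (hru n) : ℝ) : ℂ)) * Complex.I) * hru n) := by ring
      _ = ψ * ((‖hru n‖ : ℝ) : ℂ) := by rw [harr n, hehr n, mul_one]
  have hzstar : (∑ n, (starRingEnd ℂ) (ar n) * Φdiag n * hru n) = ψ * ((S : ℝ) : ℂ) := by
    simp only [hterm, ← Finset.mul_sum]
    congr 1
    rw [hS]
    push_cast
    ring
  -- the value at the optimal phases
  have hmain : (∑ i, ‖hd i + (Real.sqrt βbr : ℂ) * ab i *
      (∑ n, (starRingEnd ℂ) (ar n) * Φdiag n * hru n)‖ ^ 2) = optval := by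
    rw [hzstar]
    have hrw : ∀ i, hd i + (Real.sqrt βbr : ℂ) * ab i * (ψ * ((S : ℝ) : ℂ))
        = hd i + ((Real.sqrt βbr : ℂ) * (ψ * ((S : ℝ) : ℂ))) * ab i := by
      intro i; ring
    simp only [hrw]
    rw [ris_expand M ab hd hab, ← hc]
    have hw : ‖(Real.sqrt βbr : ℂ) * (ψ * ((S : ℝ) : ℂ))‖ = Real.sqrt βbr * S := by
      rw [norm_mul, norm_mul, Complex.norm_real, Complex.norm_real, hψnorm, one_mul,
        Real.norm_of_nonneg hSnn, Real.norm_of_nonneg (Real.sqrt_nonneg _)]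
    have hre : (starRingEnd ℂ) ((Real.sqrt βbr : ℂ) * (ψ * ((S : ℝ) : ℂ))) * c
        = ((Real.sqrt βbr * S * ‖c‖ : ℝ) : ℂ) := by
      rw [map_mul, map_mul, Complex.conj_ofReal, Complex.conj_ofReal]
      calc ((Real.sqrt βbr : ℝ) : ℂ) * ((starRingEnd ℂ) ψ * ((S : ℝ) : ℂ)) * c
          = ((Real.sqrt βbr : ℝ) : ℂ) * ((S : ℝ) : ℂ) * ((starRingEnd ℂ) ψ * c) := by ring
        _ = ((Real.sqrt βbr * S * ‖c‖ : ℝ) : ℂ) := by rw [hconjψc]; push_cast; ring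
    rw [hw, hre, Complex.ofReal_re]
    have hb : Real.sqrt βbr ^ 2 = βbr := Real.sq_sqrt hβbr.le
    show _ = (∑ i, ‖hd i‖ ^ 2) + 2 * Real.sqrt βbr * ‖c‖ * S + βbr * M * S ^ 2
    rw [mul_pow, hb]
    ring
  refine ⟨⟨?_, ?_⟩, hmain⟩
  · -- optval is attained: use φ* n = arg c + arg (ar n) - arg (hru n)
    refine ⟨fun n => arg c + arg (ar n) - arg (hru n), ?_⟩
    have hψe : Complex.exp (((arg c : ℝ) : ℂ) * Complex.I) = ψ := by
      rw [hψdef, eq_div_iff hc0, mul_comm]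
      exact Complex.norm_mul_exp_arg_mul_I c
    have hexp : ∀ n, Complex.exp (((arg c + arg (ar n) - arg (hru n) : ℝ) : ℂ) * Complex.I)
        = Φdiag n := by
      intro n
      have : (((arg c + arg (ar n) - arg (hru n) : ℝ) : ℂ) * Complex.I)
          = ((arg c : ℝ) : ℂ) * Complex.I + ((arg (ar n) : ℝ) : ℂ) * Complex.I
            + (-(((arg (hru n) : ℝ) : ℂ))) * Complex.I := by push_cast; ring
      rw [this, Complex.exp_add, Complex.exp_add, hψe]
    show (∑ i, ‖hd i + (Real.sqrt βbr : ℂ) * ab i *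
        (∑ n, (starRingEnd ℂ) (ar n) *
          Complex.exp (((arg c + arg (ar n) - arg (hru n) : ℝ) : ℂ) * Complex.I) * hru n)‖ ^ 2)
        = optval
    simp only [hexp]
    exact hmain
  · -- upper bound
    rintro x ⟨φ, rfl⟩
    show (∑ i, ‖hd i + (Real.sqrt βbr : ℂ) * ab i *
        (∑ n, (starRingEnd ℂ) (ar n) * Complex.exp (((φ n : ℝ) : ℂ) * Complex.I) * hru n)‖ ^ 2)
        ≤ optval
    set z : ℂ := ∑ n, (starRingEnd ℂ) (ar n) * Complex.exp (((φ n : ℝ) : ℂ) * Complex.I) * hru n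
      with hz
    have hzle : ‖z‖ ≤ S := by
      refine le_trans (norm_sum_le _ _) (le_of_eq ?_)
      refine Finset.sum_congr rfl fun n _ => ?_
      rw [norm_mul, norm_mul, RCLike.norm_conj, har n, one_mul,
        Complex.norm_exp_ofReal_mul_I, one_mul]
    have hrw : ∀ i, hd i + (Real.sqrt βbr : ℂ) * ab i * z
        = hd i + ((Real.sqrt βbr : ℂ) * z) * ab i := by intro i; ring
    simp only [hrw]
    rw [ris_expand M ab hd hab, ← hc]
    have h1 : ‖(Real.sqrt βbr : ℂ) * z‖ = Real.sqrt βbr * ‖z‖ := by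
      rw [norm_mul, Complex.norm_real, Real.norm_of_nonneg (Real.sqrt_nonneg _)]
    have h2 : ((starRingEnd ℂ) ((Real.sqrt βbr : ℂ) * z) * c).re
        ≤ Real.sqrt βbr * ‖z‖ * ‖c‖ := by
      refine le_trans (Complex.re_le_norm _) ?_
      rw [norm_mul, RCLike.norm_conj, h1]
    have hb : Real.sqrt βbr ^ 2 = βbr := Real.sq_sqrt hβbr.le
    have hzn : 0 ≤ ‖z‖ := norm_nonneg _
    have hM1 : (1 : ℝ) ≤ (M : ℝ) := by exact_mod_cast hM
    show _ ≤ (∑ i, ‖hd i‖ ^ 2) + 2 * Real.sqrt βbr * ‖c‖ * S + βbr * (M : ℝ) * S ^ 2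
    rw [h1]
    have h4 : (M : ℝ) * (Real.sqrt βbr * ‖z‖) ^ 2 ≤ βbr * (M : ℝ) * S ^ 2 := by
      rw [mul_pow, hb]
      have hMnn : (0 : ℝ) ≤ (M : ℝ) := le_trans zero_le_one hM1
      nlinarith [mul_le_mul_of_nonneg_left (mul_le_mul hzle hzle hzn hSnn)
        (mul_nonneg hβbr.le hMnn)]
    have h5 : 2 * ((starRingEnd ℂ) ((Real.sqrt βbr : ℂ) * z) * c).re
        ≤ 2 * Real.sqrt βbr * ‖c‖ * S := by
      nlinarith [h2, mul_nonneg (Real.sqrt_nonneg βbr) hcpos.le, hzle]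
    linarith [h4, h5]
end
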